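/- Let P and Q be nonzero integers with D = P^2 - 4Q ≠ 0, let U = U(P,Q) be nondegenerate, and let p be a prime with p ∣ D and p ∤ gcd(P,Q). Then for every n ≥ 1 with gcd(p,n) = 1 and every k ≥ 1 there exists an integer t such that U_{p^k n} = (p + p^k·t)·U_{p^{k-1} n}. -/

import Mathlib

/-- Lucas sequence of the first kind: `U 0 = 0`, `U 1 = 1`,
`U (n+2) = P * U (n+1) - Q * U n`. -/

def lucasU (P Q : ℤ) : ℕ → ℤ
  | 0 => 0
  | 1 => 1
  | n + 2 => P * lucasU P Q (n + 1) - Q * lucasU P Q n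

lemma lucasU_zero (P Q : ℤ) : lucasU P Q 0 = 0 := rfl
lemma lucasU_one (P Q : ℤ) : lucasU P Q 1 = 1 := rfl
lemma lucasU_add_two (P Q : ℤ) (n : ℕ) :
    lucasU P Q (n + 2) = P * lucasU P Q (n + 1) - Q * lucasU P Q n := rfl
lemma lucasU_two (P Q : ℤ) : lucasU P Q 2 = P := by
  rw [show 2 = 0 + 2 from rfl, lucasU_add_two, lucasU_zero, lucasU_one]; ring

/-- addition formula -/
lemma lucasU_add (P Q : ℤ) (l m : ℕ) :
    lucasU P Q (m + l + 1)
      = lucasU P Q (m + 1) * lucasU P Q (l + 1) - Q * lucasU P Q m * lucasU P Q l := by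
  induction m using Nat.twoStepInduction with
  | zero => simp [lucasU_zero, lucasU_one]
  | one =>
    rw [show 1 + l + 1 = l + 2 from by omega, lucasU_add_two, lucasU_two, lucasU_one]
    ring
  | more m ih0 ih1 =>
    rw [show m + 2 + l + 1 = (m + l + 1) + 2 from by omega, lucasU_add_two,
      show m + l + 1 + 1 = (m + 1) + l + 1 from by omega, ih1, ih0,
      show m + 2 + 1 = (m + 1) + 2 from by omega, lucasU_add_two P Q (m + 1),
      lucasU_add_two P Q m]
    ring

lemma lucasU_norm (P Q : ℤ) (m : ℕ) :
    Q ^ m = lucasU P Q (m + 1) ^ 2 - P * lucasU P Q (m + 1) * lucasU P Q m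
      + Q * lucasU P Q m ^ 2 := by
  induction m with
  | zero => simp [lucasU_zero, lucasU_one]
  | succ m ih =>
    rw [pow_succ, show m + 1 + 1 = m + 2 from rfl, lucasU_add_two]
    linear_combination Q * ih

def lucasV (P Q : ℤ) (n : ℕ) : ℤ := 2 * lucasU P Q (n + 1) - P * lucasU P Q n

lemma lucasV_sq (P Q : ℤ) (m : ℕ) :
    lucasV P Q m ^ 2 - (P ^ 2 - 4 * Q) * lucasU P Q m ^ 2 = 4 * Q ^ m := by
  unfold lucasV
  linear_combination -4 * lucasU_norm P Q m

lemma lucasU_two_mul (P Q : ℤ) (m : ℕ) :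
    lucasU P Q (2 * m) = lucasV P Q m * lucasU P Q m := by
  cases m with
  | zero => simp [lucasU_zero]
  | succ m =>
    have h := lucasU_add P Q m (m + 1)
    rw [show m + 1 + m + 1 = 2 * (m + 1) from by ring] at h
    rw [h]
    unfold lucasV
    rw [show m + 1 + 1 = m + 2 from rfl, lucasU_add_two]
    ring

lemma lucasU_two_mul_add_one (P Q : ℤ) (m : ℕ) :
    lucasU P Q (2 * m + 1) = lucasV P Q m * lucasU P Q (m + 1) - Q ^ m := by
  have h := lucasU_add P Q m m
  rw [show m + m + 1 = 2 * m + 1 from by ring] at h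
  rw [h]
  unfold lucasV
  linear_combination lucasU_norm P Q m

lemma lucasU_add_two_mul (P Q : ℤ) (m a : ℕ) :
    lucasU P Q (a + 2 * m)
      = lucasV P Q m * lucasU P Q (a + m) - Q ^ m * lucasU P Q a := by
  induction a using Nat.twoStepInduction with
  | zero =>
    rw [show 0 + 2 * m = 2 * m from by omega, show 0 + m = m from by omega,
      lucasU_two_mul, lucasU_zero]
    ring
  | one =>
    rw [show 1 + 2 * m = 2 * m + 1 from by omega, show 1 + m = m + 1 from by omega,
      lucasU_two_mul_add_one, lucasU_one]
    ring
  | more a ih0 ih1 =>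
    rw [show a + 2 + 2 * m = (a + 2 * m) + 2 from by omega, lucasU_add_two,
      show a + 2 * m + 1 = (a + 1) + 2 * m from by omega, ih1, ih0,
      show a + 2 + m = (a + m) + 2 from by omega, lucasU_add_two P Q (a + m),
      lucasU_add_two P Q a]
    ring

/-- self-similarity -/
lemma lucasU_mul (P Q : ℤ) (m l : ℕ) :
    lucasU P Q (l * m) = lucasU (lucasV P Q m) (Q ^ m) l * lucasU P Q m := by
  induction l using Nat.twoStepInduction with
  | zero => simp [lucasU_zero]
  | one => simp [lucasU_one, one_mul]
  | more l ih0 ih1 =>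
    rw [show (l + 2) * m = l * m + 2 * m from by ring, lucasU_add_two_mul,
      show l * m + m = (l + 1) * m from by ring, ih1, ih0, lucasU_add_two]
    ring

lemma lucasV_two_mul (P Q : ℤ) (m : ℕ) :
    lucasV P Q (2 * m) = lucasV P Q m ^ 2 - 2 * Q ^ m := by
  have h : lucasV P Q (2 * m) = 2 * lucasU P Q (2 * m + 1) - P * lucasU P Q (2 * m) := rfl
  rw [h, lucasU_two_mul_add_one, lucasU_two_mul]
  unfold lucasV; ring

/-- double root -/
lemma lucasU_double_root (P' Q' r N : ℤ) (h1 : P' ≡ 2 * r [ZMOD N])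
    (h2 : Q' ≡ r ^ 2 [ZMOD N]) :
    ∀ j : ℕ, lucasU P' Q' j ≡ (j : ℤ) * r ^ (j - 1) [ZMOD N] := by
  intro j
  induction j using Nat.twoStepInduction with
  | zero => simp [lucasU_zero]
  | one => simp [lucasU_one]
  | more j ih0 ih1 =>
    cases j with
    | zero =>
      rw [lucasU_two]
      calc P' ≡ 2 * r [ZMOD N] := h1
        _ = ((0 + 2 : ℕ) : ℤ) * r ^ (0 + 2 - 1) := by push_cast; ring
    | succ i =>
      rw [show i + 1 + 2 = (i + 1) + 2 from rfl, lucasU_add_two]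
      have key := (h1.mul ih1).sub (h2.mul ih0)
      calc P' * lucasU P' Q' (i + 1 + 1) - Q' * lucasU P' Q' (i + 1)
          ≡ 2 * r * (((i + 1 + 1 : ℕ) : ℤ) * r ^ (i + 1 + 1 - 1))
            - r ^ 2 * (((i + 1 : ℕ) : ℤ) * r ^ (i + 1 - 1)) [ZMOD N] := key
        _ = ((i + 1 + 2 : ℕ) : ℤ) * r ^ (i + 1 + 2 - 1) := by
            simp only [Nat.add_sub_cancel]
            push_cast; ring

lemma lucasV_def (P Q : ℤ) (n : ℕ) :
    lucasV P Q n = 2 * lucasU P Q (n + 1) - P * lucasU P Q n := rfl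


lemma pow_modEq_one_step (q : ℕ) (N x : ℤ) (hqN : (q : ℤ) ∣ N)
    (hx : x ≡ 1 [ZMOD N]) : x ^ q ≡ 1 [ZMOD N * q] := by
  have h1 : N ∣ x - 1 := by
    have h := Int.ModEq.dvd hx  -- N ∣ 1 - x
    have := dvd_neg.mpr h
    simpa using this
  have h2 : (q : ℤ) ∣ ∑ i ∈ Finset.range q, x ^ i := by
    rw [← ZMod.intCast_zmod_eq_zero_iff_dvd]
    push_cast
    have hx1 : ((x : ZMod q)) = 1 := by
      rw [← Int.cast_one, ZMod.intCast_eq_intCast_iff]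
      exact hx.of_dvd hqN
    simp [hx1]
  have key : N * q ∣ x ^ q - 1 := by
    rw [← geom_sum_mul x q]
    rw [mul_comm N (q:ℤ)]
    exact mul_dvd_mul h2 h1
  have : N * q ∣ 1 - x ^ q := by
    have := dvd_neg.mpr key
    simpa using this
  exact Int.modEq_iff_dvd.mpr this

lemma pow_pow_modEq_one' (q : ℕ) (x : ℤ) (hx : x ≡ 1 [ZMOD (q : ℤ)]) :
    ∀ j : ℕ, x ^ (q ^ j) ≡ 1 [ZMOD (q : ℤ) ^ (j + 1)] := by
  intro j
  induction j with
  | zero => simpa using hx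
  | succ j ih =>
    have step := pow_modEq_one_step q ((q : ℤ) ^ (j + 1)) (x ^ (q ^ j))
      ⟨(q : ℤ) ^ j, by ring⟩ ih
    rw [← pow_mul, ← pow_succ, ← pow_succ] at step
    exact step

lemma prime_dvd_lucasU_prime (p : ℕ) (hp : p.Prime) (P' Q' : ℤ)
    (hD : (p : ℤ) ∣ P' ^ 2 - 4 * Q') : (p : ℤ) ∣ lucasU P' Q' p := by
  rcases hp.eq_two_or_odd' with rfl | hodd
  · rw [lucasU_two]
    have h2 : (2 : ℤ) ∣ P' ^ 2 := by
      have h4 : (2 : ℤ) ∣ 4 * Q' := ⟨2 * Q', by ring⟩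
      have h := dvd_add hD h4
      push_cast at h
      simpa using h
    exact_mod_cast Int.prime_two.dvd_of_dvd_pow h2
  · have hcop : IsCoprime ((2 : ℕ) : ℤ) ((p : ℕ) : ℤ) := by
      apply Nat.Coprime.isCoprime
      exact (Nat.Prime.coprime_iff_not_dvd Nat.prime_two).mpr
        (by have := Nat.odd_iff.mp hodd; omega)
    obtain ⟨u, v, huv⟩ := hcop
    push_cast at huv
    -- huv : u * 2 + v * p = 1
    have h1 : P' ≡ 2 * (u * P') [ZMOD (p : ℤ)] := by
      refine Int.modEq_iff_dvd.mpr ⟨-(P' * v), ?_⟩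
      linear_combination P' * huv
    have hcop4 : IsCoprime ((p : ℤ)) (4 : ℤ) := by
      have : IsCoprime ((p : ℤ)) (2 : ℤ) := ⟨v, u, by linarith [huv]⟩
      have h4 := this.pow_right (n := 2)
      norm_num at h4
      exact h4
    have h2 : Q' ≡ (u * P') ^ 2 [ZMOD (p : ℤ)] := by
      have h4 : (p : ℤ) ∣ 4 * ((u * P') ^ 2 - Q') := by
        obtain ⟨d, hd⟩ := hD
        refine ⟨d + P' ^ 2 * (v ^ 2 * (p : ℤ) - 2 * v), ?_⟩
        linear_combination hd + P' ^ 2 * (2 * u - v * (p : ℤ) + 1) * huv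
      exact Int.modEq_iff_dvd.mpr (hcop4.dvd_of_dvd_mul_left h4)
    have hdr := lucasU_double_root P' Q' (u * P') (p : ℤ) h1 h2 p
    have h3 : (p : ℤ) ∣ (p : ℤ) * (u * P') ^ (p - 1) - lucasU P' Q' p := by
      have := Int.ModEq.dvd hdr
      exact this
    have : lucasU P' Q' p
        = (p : ℤ) * (u * P') ^ (p - 1) - ((p : ℤ) * (u * P') ^ (p - 1) - lucasU P' Q' p) := by
      ring
    rw [this]
    exact dvd_sub (Dvd.intro _ rfl) h3

lemma pow_dvd_lucasU (P Q : ℤ) (p : ℕ) (hp : p.Prime)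
    (hD : (p : ℤ) ∣ P ^ 2 - 4 * Q) :
    ∀ (j n' : ℕ), (p : ℤ) ^ j ∣ lucasU P Q (p ^ j * n') := by
  intro j
  induction j with
  | zero => intro n'; simpa using one_dvd _
  | succ j ih =>
    intro n'
    rw [show p ^ (j + 1) * n' = p * (p ^ j * n') from by ring, lucasU_mul P Q (p ^ j * n') p,
      pow_succ']
    apply mul_dvd_mul
    · apply prime_dvd_lucasU_prime p hp
      have hre : lucasV P Q (p ^ j * n') ^ 2 - 4 * Q ^ (p ^ j * n')
          = (P ^ 2 - 4 * Q) * lucasU P Q (p ^ j * n') ^ 2 := by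
        linarith [lucasV_sq P Q (p ^ j * n')]
      rw [hre]
      exact Dvd.dvd.mul_right hD _
    · exact ih n'

theorem stmt_10 (P Q : ℤ) (hP : P ≠ 0) (hQ : Q ≠ 0) (hD : P ^ 2 - 4 * Q ≠ 0)
    (hnd : ∀ m : ℕ, 1 ≤ m → lucasU P Q m ≠ 0)
    (p : ℕ) (hp : p.Prime) (hpD : (p : ℤ) ∣ (P ^ 2 - 4 * Q))
    (hpPQ : ¬ p ∣ Int.gcd P Q)
    (n : ℕ) (hn : 1 ≤ n) (hpn : Nat.gcd p n = 1) (k : ℕ) (hk : 1 ≤ k) :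
    ∃ t : ℤ, lucasU P Q (p ^ k * n)
      = ((p : ℤ) + (p : ℤ) ^ k * t) * lucasU P Q (p ^ (k - 1) * n) := by
  obtain ⟨k', rfl⟩ : ∃ k', k = k' + 1 := ⟨k - 1, by omega⟩
  simp only [Nat.add_sub_cancel]
  rcases hp.eq_two_or_odd' with rfl | hodd
  · -- p = 2
    have hP2 : (2 : ℤ) ∣ P := by
      have h2 : (2 : ℤ) ∣ P ^ 2 := by
        have h4 : (2 : ℤ) ∣ 4 * Q := ⟨2 * Q, by ring⟩
        have h := dvd_add hpD h4
        push_cast at h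
        simpa using h
      exact Int.prime_two.dvd_of_dvd_pow h2
    have hQodd : Q ≡ 1 [ZMOD (2 : ℤ)] := by
      refine Int.modEq_iff_dvd.mpr ?_
      rcases Int.even_or_odd Q with he | ho
      · exfalso
        apply hpPQ
        have hg : (2 : ℤ) ∣ (Int.gcd P Q : ℤ) :=
          Int.dvd_coe_gcd hP2 (by obtain ⟨c, hc⟩ := he; exact ⟨c, by linarith⟩)
        exact_mod_cast hg
      · obtain ⟨c, hc⟩ := ho
        exact ⟨-c, by omega⟩
    have claim : ∀ K : ℕ, (2 : ℤ) ^ (K + 1) ∣ lucasV P Q (2 ^ K * n) - 2 := by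
      intro K
      induction K with
      | zero =>
        simp only [pow_zero, one_mul, pow_one]
        rw [lucasV_def]
        obtain ⟨c, hc⟩ := hP2
        exact ⟨lucasU P Q (n + 1) - c * lucasU P Q n - 1, by rw [hc]; ring⟩
      | succ K ih =>
        rw [show 2 ^ (K + 1) * n = 2 * (2 ^ K * n) from by ring, lucasV_two_mul]
        obtain ⟨t, ht⟩ := ih
        have hV : lucasV P Q (2 ^ K * n) = 2 + 2 ^ (K + 1) * t := by linarith
        have hQm : (2 : ℤ) ^ (K + 1) ∣ Q ^ (2 ^ K * n) - 1 := by
          have h1 := (pow_pow_modEq_one' 2 Q hQodd K).pow n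
          rw [← pow_mul] at h1
          have h2 := Int.ModEq.dvd h1
          have h3 := dvd_neg.mpr h2
          push_cast at h3 ⊢
          simpa using h3
        obtain ⟨s, hs⟩ := hQm
        have hQs : Q ^ (2 ^ K * n) = 1 + 2 ^ (K + 1) * s := by linarith
        refine ⟨2 * t - s + 2 ^ K * t ^ 2, ?_⟩
        rw [hV, hQs]
        ring
    obtain ⟨t, ht⟩ := claim k'
    refine ⟨t, ?_⟩
    rw [show (2 : ℕ) ^ (k' + 1) * n = 2 * (2 ^ k' * n) from by ring, lucasU_two_mul]
    have hV : lucasV P Q (2 ^ k' * n) = 2 + 2 ^ (k' + 1) * t := by linarith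
    rw [hV]
    push_cast
    ring
  · -- odd p
    set m : ℕ := p ^ k' * n with hm
    set Vm : ℤ := lucasV P Q m with hVm
    set N : ℤ := (p : ℤ) ^ (k' + 1) with hN
    have hcop2 : IsCoprime ((2 : ℤ)) ((p : ℤ)) := by
      apply Nat.Coprime.isCoprime
      exact (Nat.Prime.coprime_iff_not_dvd Nat.prime_two).mpr
        (by have := Nat.odd_iff.mp hodd; omega)
    have hpP : ¬ (p : ℤ) ∣ P := by
      intro h
      apply hpPQ
      have hcop4 : IsCoprime ((p : ℤ)) (4 : ℤ) := by
        have h4 := (hcop2.symm.pow_right (n := 2))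
        norm_num at h4
        exact h4
      have hQd : (p : ℤ) ∣ Q := by
        have hp2 : (p : ℤ) ∣ P ^ 2 := dvd_pow h two_ne_zero
        have h4 : (p : ℤ) ∣ 4 * Q := by
          have := dvd_sub hp2 hpD
          simpa using this
        exact hcop4.dvd_of_dvd_mul_left h4
      have hg : (p : ℤ) ∣ (Int.gcd P Q : ℤ) := Int.dvd_coe_gcd h hQd
      exact_mod_cast hg
    obtain ⟨u, v, huv⟩ := hcop2.pow_right (n := k' + 1)
    -- huv : u * 2 + v * p ^ (k'+1) = 1
    set r : ℤ := u * Vm with hr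
    have hUm : (p : ℤ) ^ k' ∣ lucasU P Q m := pow_dvd_lucasU P Q p hp hpD k' n
    have hDU : N ∣ (P ^ 2 - 4 * Q) * lucasU P Q m ^ 2 := by
      obtain ⟨d, hd⟩ := hpD
      obtain ⟨e, he⟩ := hUm
      rw [hd, he, hN]
      exact ⟨d * (p : ℤ) ^ k' * e ^ 2, by ring⟩
    have h1 : Vm ≡ 2 * r [ZMOD N] := by
      refine Int.modEq_iff_dvd.mpr ⟨-(Vm * v), ?_⟩
      linear_combination Vm * huv
    have hcop4N : IsCoprime N (4 : ℤ) := by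
      have h2 : IsCoprime ((p : ℤ)) (2 : ℤ) := hcop2.symm
      have h4 := (h2.pow (m := k' + 1) (n := 2))
      norm_num at h4
      exact h4
    have h2 : Q ^ m ≡ r ^ 2 [ZMOD N] := by
      have h4 : N ∣ 4 * (r ^ 2 - Q ^ m) := by
        obtain ⟨w1, hw1⟩ := hDU
        refine ⟨w1 + Vm ^ 2 * (v ^ 2 * N - 2 * v), ?_⟩
        have hVsq := lucasV_sq P Q m
        linear_combination hw1 + hVsq + Vm ^ 2 * (2 * u - v * N + 1) * huv
      exact Int.modEq_iff_dvd.mpr (hcop4N.dvd_of_dvd_mul_left h4)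
    have hdr := lucasU_double_root Vm (Q ^ m) r N h1 h2 p
    obtain ⟨e, hpe⟩ := hodd
    -- Q^e ≡ 1 mod p
    have hup : 2 * u ≡ 1 [ZMOD (p : ℤ)] := by
      refine Int.modEq_iff_dvd.mpr ⟨v * (p : ℤ) ^ k', ?_⟩
      linear_combination -huv
    have hQe : Q ^ e ≡ 1 [ZMOD (p : ℤ)] := by
      have hcop4p : IsCoprime ((p : ℤ)) (4 : ℤ) := by
        have h4 := (hcop2.symm.pow_right (n := 2))
        norm_num at h4
        exact h4
      have hQc : Q ≡ (P * u) ^ 2 [ZMOD (p : ℤ)] := by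
        have h4 : (p : ℤ) ∣ 4 * ((P * u) ^ 2 - Q) := by
          obtain ⟨d, hd⟩ := hpD
          obtain ⟨c, hc⟩ := Int.modEq_iff_dvd.mp hup
          -- hc : 1 - 2 * u = p * c
          refine ⟨d + P ^ 2 * ((p : ℤ) * c ^ 2 - 2 * c), ?_⟩
          linear_combination hd - P ^ 2 * (1 + 2 * u - (p : ℤ) * c) * hc
        exact Int.modEq_iff_dvd.mpr (hcop4p.dvd_of_dvd_mul_left h4)
      have hcoprime : IsCoprime (P * u) ((p : ℤ)) := by
        have hppr : Prime ((p : ℤ)) := Nat.prime_iff_prime_int.mp hp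
        have hnd2 : ¬ (p : ℤ) ∣ P * u := by
          intro hdvd
          rcases (Int.Prime.dvd_mul' hp hdvd) with hA | hB
          · exact hpP hA
          · -- p ∣ u contradicts 2u ≡ 1 mod p
            obtain ⟨c, hc⟩ := Int.modEq_iff_dvd.mp hup
            obtain ⟨w, hw⟩ := hB
            have : (p : ℤ) ∣ 1 := ⟨c + 2 * w, by linear_combination hc + 2 * hw⟩
            have hge := hp.two_le
            have habs := Int.le_of_dvd one_pos this
            omega
        exact (hppr.coprime_iff_not_dvd.mpr hnd2).symm
      have hfer : (P * u) ^ (p - 1) ≡ 1 [ZMOD (p : ℤ)] :=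
        Int.ModEq.pow_card_sub_one_eq_one hp hcoprime
      calc Q ^ e ≡ ((P * u) ^ 2) ^ e [ZMOD (p : ℤ)] := hQc.pow e
        _ = (P * u) ^ (p - 1) := by rw [← pow_mul]; congr 1; omega
        _ ≡ 1 [ZMOD (p : ℤ)] := hfer
    have hQme : Q ^ (m * e) ≡ 1 [ZMOD N] := by
      have hh := (pow_pow_modEq_one' p (Q ^ e) hQe k').pow n
      rw [← pow_mul, ← pow_mul] at hh
      rw [show m * e = e * (p ^ k' * n) from by rw [hm]; ring]
      simpa using hh
    have hdvdN : (p : ℤ) ^ k' ∣ N := ⟨(p : ℤ), by rw [hN]; ring⟩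
    have hr1 : r ^ (p - 1) ≡ 1 [ZMOD (p : ℤ) ^ k'] := by
      calc r ^ (p - 1) = (r ^ 2) ^ e := by rw [← pow_mul]; congr 1; omega
        _ ≡ (Q ^ m) ^ e [ZMOD (p : ℤ) ^ k'] := ((h2.symm).of_dvd hdvdN).pow e
        _ = Q ^ (m * e) := by rw [← pow_mul]
        _ ≡ 1 [ZMOD (p : ℤ) ^ k'] := hQme.of_dvd hdvdN
    have hfinal : (p : ℤ) * r ^ (p - 1) ≡ (p : ℤ) [ZMOD N] := by
      obtain ⟨c, hc⟩ := Int.modEq_iff_dvd.mp hr1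
      -- hc : 1 - r ^ (p-1) = p^k' * c
      refine Int.modEq_iff_dvd.mpr ⟨c, ?_⟩
      rw [hN]
      linear_combination (p : ℤ) * hc
    have hS : lucasU Vm (Q ^ m) p ≡ (p : ℤ) [ZMOD N] := (hdr).trans hfinal
    obtain ⟨t, ht⟩ := Int.modEq_iff_dvd.mp hS
    -- ht : p - lucasU Vm (Q^m) p = N * t
    refine ⟨-t, ?_⟩
    rw [show p ^ (k' + 1) * n = p * m from by rw [hm]; ring, lucasU_mul P Q m p]
    rw [show lucasU (lucasV P Q m) (Q ^ m) p = (p : ℤ) + (p : ℤ) ^ (k' + 1) * (-t) from by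
      rw [← hVm, ← hN]; linear_combination -ht]
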